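/- Let (v_0, v_1, …, v_k, v_{k+1}) be a path in the regular tree T with legal colouring c, and set e_i = (v_i, v_{i+1}) for 0 ≤ i ≤ k. Then in U(F), [U_{e_0} : U_{e_0} ∩ U_{e_k}] = ∏_{i=0}^{k-1} |F_{c(e_i)} / (F_{c(e_i)} ∩ F_{c(e_{i+1})})|. -/

import Mathlib

open SimpleGraph

namespace BMAux

open scoped Classical

variable {V Ω : Type*}

/-- The unique neighbour of `v` with colour `a`. -/
noncomputable def step (T : SimpleGraph V) (c : V → V → Ω) (v : V) (a : Ω) : V :=
  if h : ∃ u, u ∈ T.neighborSet v ∧ c v u = a then h.choose else v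

section Basic

variable {T : SimpleGraph V} {c : V → V → Ω}
variable (hbij : ∀ v : V, Set.BijOn (fun u => c v u) (T.neighborSet v) Set.univ)

include hbij

lemma step_spec (v : V) (a : Ω) :
    T.Adj v (step T c v a) ∧ c v (step T c v a) = a := by
  have h : ∃ u, u ∈ T.neighborSet v ∧ c v u = a := by
    obtain ⟨u, hu, hcu⟩ := (hbij v).surjOn (Set.mem_univ a)
    exact ⟨u, hu, hcu⟩
  classical
  rw [step, dif_pos h]
  exact ⟨h.choose_spec.1, h.choose_spec.2⟩

lemma step_adj (v : V) (a : Ω) : T.Adj v (step T c v a) := (step_spec hbij v a).1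

lemma c_step (v : V) (a : Ω) : c v (step T c v a) = a := (step_spec hbij v a).2

lemma step_eq {v u : V} (h : T.Adj v u) : step T c v (c v u) = u :=
  (hbij v).injOn (step_adj hbij v (c v u)) h (by rw [c_step hbij])

lemma c_inj {v u w : V} (hu : T.Adj v u) (hw : T.Adj v w) (h : c v u = c v w) : u = w :=
  (hbij v).injOn hu hw h

end Basic

/-- Follow a list of colours from a vertex. -/
noncomputable def follow (T : SimpleGraph V) (c : V → V → Ω) : V → List Ω → V
  | x, [] => x
  | x, a :: l => follow T c (step T c x a) l

@[simp] lemma follow_nil (T : SimpleGraph V) (c : V → V → Ω) (x : V) :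
    follow T c x [] = x := rfl

@[simp] lemma follow_cons (T : SimpleGraph V) (c : V → V → Ω) (x : V) (a : Ω) (l : List Ω) :
    follow T c x (a :: l) = follow T c (step T c x a) l := rfl

lemma follow_append (T : SimpleGraph V) (c : V → V → Ω) (x : V) (l₁ l₂ : List Ω) :
    follow T c x (l₁ ++ l₂) = follow T c (follow T c x l₁) l₂ := by
  induction l₁ generalizing x with
  | nil => rfl
  | cons a l ih => simp [ih]

/-- The walk obtained by following a list of colours. -/
noncomputable def walkOf {T : SimpleGraph V} {c : V → V → Ω}
    (hbij : ∀ v : V, Set.BijOn (fun u => c v u) (T.neighborSet v) Set.univ) :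
    (x : V) → (l : List Ω) → T.Walk x (follow T c x l)
  | _, [] => Walk.nil
  | x, a :: l => Walk.cons (step_adj hbij x a) (walkOf hbij (step T c x a) l)

/-- The colours of a walk. -/
noncomputable def colours (c : V → V → Ω) {T : SimpleGraph V} : {x y : V} → T.Walk x y → List Ω
  | _, _, .nil => []
  | x, _, .cons (v := m) _ p => c x m :: colours c p

@[simp] lemma colours_nil (c : V → V → Ω) {T : SimpleGraph V} {x : V} :
    colours c (Walk.nil : T.Walk x x) = [] := rfl

@[simp] lemma colours_cons (c : V → V → Ω) {T : SimpleGraph V} {x m y : V}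
    (h : T.Adj x m) (p : T.Walk m y) :
    colours c (Walk.cons h p) = c x m :: colours c p := rfl

lemma colours_walkOf {T : SimpleGraph V} {c : V → V → Ω}
    (hbij : ∀ v : V, Set.BijOn (fun u => c v u) (T.neighborSet v) Set.univ)
    (x : V) (l : List Ω) : colours c (walkOf hbij x l) = l := by
  induction l generalizing x with
  | nil => rfl
  | cons a l ih => simp [walkOf, ih, c_step hbij]

lemma follow_colours {T : SimpleGraph V} {c : V → V → Ω}
    (hbij : ∀ v : V, Set.BijOn (fun u => c v u) (T.neighborSet v) Set.univ)
    {x y : V} (p : T.Walk x y) : follow T c x (colours c p) = y := by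
  induction p with
  | nil => rfl
  | cons h p ih => simpa [step_eq hbij h] using ih

lemma colours_append (c : V → V → Ω) {T : SimpleGraph V} {x y z : V}
    (p : T.Walk x y) (q : T.Walk y z) :
    colours c (p.append q) = colours c p ++ colours c q := by
  induction p with
  | nil => rfl
  | cons h p ih => simp [Walk.cons_append, ih]

lemma colours_concat (c : V → V → Ω) {T : SimpleGraph V} {x y z : V}
    (p : T.Walk x y) (h : T.Adj y z) :
    colours c (p.concat h) = colours c p ++ [c y z] := by
  rw [Walk.concat_eq_append, colours_append]; rfl


section Paths

variable {T : SimpleGraph V} {c : V → V → Ω}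

/-- In a path starting at `x`, any edge containing `x` is the first edge. -/
lemma second_of_edge {x y z : V} (p : T.Walk x y) (hp : p.IsPath)
    (he : s(x, z) ∈ p.edges) :
    ∃ (h : T.Adj x z) (q : T.Walk z y), p = Walk.cons h q := by
  cases p with
  | nil => simp at he
  | cons h q =>
    rename_i m
    rw [Walk.edges_cons, List.mem_cons] at he
    rcases he with he | he
    · have hzm : z = m := by
        have := Sym2.congr_right.mp he
        exact this
      subst hzm
      exact ⟨h, q, rfl⟩
    · exfalso
      have hx : x ∈ q.support := q.fst_mem_support_of_mem_edges he
      rw [Walk.cons_isPath_iff] at hp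
      exact hp.2 hx

/-- In an acyclic graph, one cannot return to `x` along a path avoiding the edge `s(x,y)`. -/
lemma not_mem_support_of_acyclic (hA : T.IsAcyclic) {x y z : V} (h : T.Adj x y)
    (p : T.Walk y z) (hp : p.IsPath) (he : s(x, y) ∉ p.edges) : x ∉ p.support := by
  intro hx
  have hq : (p.takeUntil x hx).IsPath := hp.takeUntil hx
  have hcyc : (Walk.cons h (p.takeUntil x hx)).IsCycle := by
    rw [Walk.cons_isCycle_iff]
    refine ⟨hq, fun hmem => he ?_⟩
    exact Walk.edges_takeUntil_subset p hx hmem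
  exact hA _ hcyc

/-- In an acyclic graph, extending a path by a fresh edge yields a path. -/
lemma concat_isPath (hA : T.IsAcyclic) {x y z : V} (p : T.Walk x y) (hp : p.IsPath)
    (h : T.Adj y z) (he : s(y, z) ∉ p.edges) : (p.concat h).IsPath := by
  have hz : z ∉ p.support := by
    intro hz
    have hq : (p.dropUntil z hz).IsPath := hp.dropUntil hz
    have hcyc : (Walk.cons h (p.dropUntil z hz)).IsCycle := by
      rw [Walk.cons_isCycle_iff]
      refine ⟨hq, fun hmem => he ?_⟩
      exact Walk.edges_dropUntil_subset p hz hmem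
    exact hA _ hcyc
  rw [← Walk.isPath_reverse_iff]
  rw [Walk.concat_eq_append, Walk.reverse_append]
  simp only [Walk.reverse_cons, Walk.reverse_nil, Walk.nil_append, Walk.cons_append]
  rw [Walk.cons_isPath_iff]
  constructor
  · exact hp.reverse
  · simpa using hz

variable (hsym : ∀ u v : V, T.Adj u v → c u v = c v u)
variable (hbij : ∀ v : V, Set.BijOn (fun u => c v u) (T.neighborSet v) Set.univ)

include hsym hbij in
lemma walkOf_isPath (hA : T.IsAcyclic) :
    ∀ (l : List Ω) (x : V), l.Chain' (· ≠ ·) → (walkOf hbij x l).IsPath := by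
  intro l
  induction l with
  | nil => intro x _; exact Walk.IsPath.nil
  | cons a l ih =>
    intro x hch
    have hch' : l.Chain' (· ≠ ·) := hch.tail
    have hpl : (walkOf hbij (step T c x a) l).IsPath := ih _ hch'
    show (Walk.cons (step_adj hbij x a) (walkOf hbij (step T c x a) l)).IsPath
    rw [Walk.cons_isPath_iff]
    refine ⟨hpl, ?_⟩
    set y := step T c x a with hy
    have hadjy : T.Adj x y := step_adj hbij x a
    apply not_mem_support_of_acyclic hA hadjy _ hpl
    intro hmem
    obtain ⟨h', q, hq⟩ := second_of_edge (walkOf hbij y l) hpl (by rwa [Sym2.eq_swap])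
    -- the second vertex of `walkOf y l` is `x`, so `l` starts with `c y x = c x y = a`
    cases l with
    | nil => simp [walkOf] at hq
    | cons b l' =>
      have hsupp := congrArg Walk.support hq
      rw [walkOf] at hsupp
      simp only [Walk.support_cons] at hsupp
      have hxstep : step T c y b = x := by
        have h2 : ((walkOf hbij (step T c y b) l').support : List V) = q.support := by
          have := (List.cons.injEq _ _ _ _).mp hsupp
          exact this.2
        have e := congrArg List.head? h2
        rw [Walk.support_eq_cons (walkOf hbij (step T c y b) l'),
          Walk.support_eq_cons q, List.head?_cons, List.head?_cons] at e
        exact Option.some.inj e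
      have hb : b = c y x := by rw [← hxstep, c_step hbij]
      have hcyx : c y x = c x y := hsym y x hadjy.symm
      have hcxy : c x y = a := by rw [hy, c_step hbij]
      have hab : a ≠ b := (List.isChain_cons_cons.mp hch).1
      exact hab (by rw [hb, hcyx, hcxy])

end Paths


section Tree

variable {T : SimpleGraph V} {c : V → V → Ω}

/-- A chosen path from `b` to `u` in a tree. -/
noncomputable def thePath (hT : T.IsTree) (b u : V) : T.Walk b u :=
  (Classical.choice (hT.isConnected.preconnected b u) : T.Walk b u).bypass

lemma thePath_isPath (hT : T.IsTree) (b u : V) : (thePath hT b u).IsPath :=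
  Walk.bypass_isPath _

/-- The colour list of the geodesic from `b` to `u`. -/
noncomputable def pathL (hT : T.IsTree) (c : V → V → Ω) (b u : V) : List Ω :=
  colours c (thePath hT b u)

lemma colours_eq_pathL (hT : T.IsTree) {b u : V} (p : T.Walk b u) (hp : p.IsPath) :
    colours c p = pathL hT c b u := by
  have : (⟨p, hp⟩ : T.Path b u) = ⟨thePath hT b u, thePath_isPath hT b u⟩ :=
    hT.IsAcyclic.path_unique _ _
  have hw : p = thePath hT b u := congrArg Subtype.val this
  rw [pathL, hw]

variable (hsym : ∀ u v : V, T.Adj u v → c u v = c v u)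
variable (hbij : ∀ v : V, Set.BijOn (fun u => c v u) (T.neighborSet v) Set.univ)

include hbij in
lemma follow_pathL (hT : T.IsTree) (b u : V) :
    follow T c b (pathL hT c b u) = u :=
  follow_colours hbij (thePath hT b u)

@[simp] lemma pathL_self (hT : T.IsTree) (b : V) : pathL hT c b b = [] := by
  have := colours_eq_pathL (c := c) hT (Walk.nil : T.Walk b b) Walk.IsPath.nil
  rw [← this, colours_nil]

include hsym hbij in
lemma pathL_follow (hT : T.IsTree) (b : V) {l : List Ω} (hl : l.Chain' (· ≠ ·)) :
    pathL hT c b (follow T c b l) = l := by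
  rw [← colours_eq_pathL hT (walkOf hbij b l)
    (walkOf_isPath hsym hbij hT.IsAcyclic l b hl), colours_walkOf]

include hsym hbij in
lemma chain'_pathL (hT : T.IsTree) (b u : V) :
    (pathL hT c b u).Chain' (· ≠ ·) := by
  have h : ∀ (x y : V) (p : T.Walk x y), p.IsPath → (colours c p).Chain' (· ≠ ·) := by
    intro x y p
    induction p with
    | nil => intro _; exact List.isChain_nil
    | cons h p ih =>
      rename_i x' m y'
      intro hp
      rw [colours_cons]
      change List.IsChain _ _; rw [List.isChain_cons]
      refine ⟨?_, ih hp.of_cons⟩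
      intro a ha
      cases p with
      | nil => simp at ha
      | cons h' p' =>
        rename_i z
        rw [colours_cons, List.head?_cons] at ha
        have ha' : a = c m z := (Option.some.inj ha).symm
        intro hcontr
        have : c m x' = c m z := by
          rw [← hsym x' m h, hcontr, ha']
        have hxz : x' = z := c_inj hbij h.symm h' this
        rw [Walk.cons_isPath_iff] at hp
        exact hp.2 (by rw [hxz, Walk.support_cons]; exact List.mem_cons_of_mem _ (Walk.start_mem_support p'))
  exact h b u (thePath hT b u) (thePath_isPath hT b u)

end Tree


section AdjChar

variable {T : SimpleGraph V} {c : V → V → Ω}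

lemma pathL_adj (hT : T.IsTree) {b u w : V} (h : T.Adj u w) :
    pathL hT c b w = pathL hT c b u ++ [c u w] ∨
    pathL hT c b u = pathL hT c b w ++ [c w u] := by
  set p := thePath hT b u with hp_def
  have hp : p.IsPath := thePath_isPath hT b u
  by_cases he : s(u, w) ∈ p.edges
  · right
    have hrev : p.reverse.IsPath := hp.reverse
    have he' : s(u, w) ∈ p.reverse.edges := by
      rw [Walk.edges_reverse, List.mem_reverse]; exact he
    obtain ⟨h', q, hq⟩ := second_of_edge p.reverse hrev he'
    have hqpath : q.IsPath := by
      rw [hq] at hrev; exact hrev.of_cons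
    have hqr : q.reverse.IsPath := hqpath.reverse
    have hpeq : p = q.reverse.concat h'.symm := by
      have : p.reverse.reverse = (Walk.cons h' q).reverse := by rw [hq]
      rwa [Walk.reverse_reverse, Walk.reverse_cons] at this
    have h1 : colours c p = colours c q.reverse ++ [c w u] := by
      rw [hpeq, colours_concat]
    have h2 : colours c q.reverse = pathL hT c b w := colours_eq_pathL hT _ hqr
    have h3 : colours c p = pathL hT c b u := rfl
    rw [← h3, h1, h2]
  · left
    have hcp : (p.concat h).IsPath := concat_isPath hT.IsAcyclic p hp h he
    have h5 := colours_eq_pathL (c := c) hT (p.concat h) hcp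
    rw [colours_concat] at h5
    rw [← h5]; rfl

end AdjChar

section Construct

variable {T : SimpleGraph V} {c : V → V → Ω}

/-- Apply `f` to a colour list unless it starts with the protected colour `a₀`. -/
noncomputable def transform (f : Equiv.Perm Ω) (a₀ : Ω) (l : List Ω) : List Ω :=
  if l.head? = some a₀ then l else l.map f

@[simp] lemma transform_nil (f : Equiv.Perm Ω) (a₀ : Ω) : transform f a₀ [] = [] := by
  simp [transform]

lemma transform_cons_eq (f : Equiv.Perm Ω) {a₀ a : Ω} (l : List Ω) (h : a = a₀) :
    transform f a₀ (a :: l) = a :: l := by simp [transform, h]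

lemma transform_cons_ne (f : Equiv.Perm Ω) {a₀ a : Ω} (l : List Ω) (h : a ≠ a₀) :
    transform f a₀ (a :: l) = f a :: l.map f := by simp [transform, h]

lemma chain'_transform (f : Equiv.Perm Ω) (a₀ : Ω) {l : List Ω} (hl : l.Chain' (· ≠ ·)) :
    (transform f a₀ l).Chain' (· ≠ ·) := by
  rw [transform]
  split
  · exact hl
  · change List.IsChain _ _; rw [List.isChain_map]
    exact List.IsChain.imp (fun a b hab e => hab (f.injective e)) hl

lemma transform_inv (f : Equiv.Perm Ω) {a₀ : Ω} (hfix : f a₀ = a₀) (l : List Ω) :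
    transform f⁻¹ a₀ (transform f a₀ l) = l := by
  cases l with
  | nil => simp
  | cons a l =>
    by_cases ha : a = a₀
    · rw [transform_cons_eq f l ha, transform_cons_eq f⁻¹ l ha]
    · rw [transform_cons_ne f l ha]
      have hfa : f a ≠ a₀ := by
        intro hcon
        exact ha (by rw [← f.injective (hcon.trans hfix.symm)])
      rw [transform_cons_ne f⁻¹ _ hfa]
      have hcomp : ⇑f⁻¹ ∘ ⇑f = id := by ext x; simp
      simp [List.map_map, hcomp]

variable (hsym : ∀ u v : V, T.Adj u v → c u v = c v u)
variable (hbij : ∀ v : V, Set.BijOn (fun u => c v u) (T.neighborSet v) Set.univ)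

/-- The candidate automorphism: identity on the `a₀`-branch at `b`, colour-`f` elsewhere. -/
noncomputable def gfun (hT : T.IsTree) (c : V → V → Ω) (b : V) (f : Equiv.Perm Ω) (a₀ : Ω)
    (u : V) : V :=
  follow T c b (transform f a₀ (pathL hT c b u))

include hsym hbij

lemma pathL_gfun (hT : T.IsTree) (b : V) (f : Equiv.Perm Ω) (a₀ : Ω) (u : V) :
    pathL hT c b (gfun hT c b f a₀ u) = transform f a₀ (pathL hT c b u) :=
  pathL_follow hsym hbij hT b (chain'_transform f a₀ (chain'_pathL hsym hbij hT b u))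

lemma gfun_inv (hT : T.IsTree) (b : V) (f : Equiv.Perm Ω) {a₀ : Ω} (hfix : f a₀ = a₀) (u : V) :
    gfun hT c b f⁻¹ a₀ (gfun hT c b f a₀ u) = u := by
  rw [gfun, pathL_gfun hsym hbij, transform_inv f hfix, follow_pathL hbij]

omit hsym in
lemma gfun_fix (hT : T.IsTree) (b : V) (f : Equiv.Perm Ω) (a₀ : Ω) (u : V)
    (h : (pathL hT c b u).head? = some a₀ ∨ pathL hT c b u = []) :
    gfun hT c b f a₀ u = u := by
  have : transform f a₀ (pathL hT c b u) = pathL hT c b u := by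
    rcases h with h | h
    · rw [transform, if_pos h]
    · rw [h, transform_nil]
  rw [gfun, this, follow_pathL hbij]

omit hsym in
lemma eq_base (hT : T.IsTree) {b u : V} (h : pathL hT c b u = []) : u = b := by
  have := follow_pathL (c := c) hbij hT b u
  rw [h] at this
  exact this.symm

lemma gfun_adj_aux (hT : T.IsTree) (b : V) (f : Equiv.Perm Ω) (a₀ : Ω) {u w : V}
    (h : T.Adj u w) (hL : pathL hT c b w = pathL hT c b u ++ [c u w]) :
    T.Adj (gfun hT c b f a₀ u) (gfun hT c b f a₀ w) := by
  cases hLu : pathL hT c b u with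
  | nil =>
    have hub : u = b := eq_base hbij hT hLu
    have hgu : gfun hT c b f a₀ u = b := by
      rw [gfun, hLu, transform_nil, follow_nil]
    rw [hLu, List.nil_append] at hL
    by_cases ha : c u w = a₀
    · rw [hgu, gfun, hL, transform_cons_eq f _ ha, follow_cons, follow_nil]
      exact step_adj hbij b (c u w)
    · rw [hgu, gfun, hL, transform_cons_ne f _ ha, List.map_nil, follow_cons, follow_nil]
      exact step_adj hbij b (f (c u w))
  | cons a l =>
    by_cases ha : a = a₀
    · have hgu : gfun hT c b f a₀ u = u := gfun_fix hbij hT b f a₀ u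
        (Or.inl (by rw [hLu, List.head?_cons, ha]))
      have hgw : gfun hT c b f a₀ w = w := gfun_fix hbij hT b f a₀ w
        (Or.inl (by rw [hL, hLu, List.cons_append, List.head?_cons, ha]))
      rw [hgu, hgw]; exact h
    · have hgu : gfun hT c b f a₀ u = follow T c b ((pathL hT c b u).map f) := by
        rw [gfun, hLu, transform_cons_ne f _ ha, ← List.map_cons, ← hLu]
      have hgw : gfun hT c b f a₀ w =
          step T c (gfun hT c b f a₀ u) (f (c u w)) := by
        rw [hgu]
        show follow T c b (transform f a₀ (pathL hT c b w)) = _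
        rw [hL, hLu, List.cons_append, transform_cons_ne f _ ha, List.map_append,
          show (f a :: (List.map f l ++ List.map f [c u w]) : List Ω) =
            (f a :: List.map f l) ++ [f (c u w)] by simp,
          follow_append, ← List.map_cons, ← hLu]
        rfl
      rw [hgw]
      exact step_adj hbij _ _
  
lemma gfun_adj (hT : T.IsTree) (b : V) (f : Equiv.Perm Ω) (a₀ : Ω) {u w : V}
    (h : T.Adj u w) : T.Adj (gfun hT c b f a₀ u) (gfun hT c b f a₀ w) := by
  rcases pathL_adj hT (b := b) h with hL | hL
  · exact gfun_adj_aux hsym hbij hT b f a₀ h hL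
  · exact (gfun_adj_aux hsym hbij hT b f a₀ h.symm hL).symm

omit hsym hbij in
lemma pathL_of_adj_base (hT : T.IsTree) {b u : V} (h : T.Adj b u) :
    pathL hT c b u = [c b u] := by
  rcases pathL_adj hT (b := b) h with hL | hL
  · rw [hL, pathL_self, List.nil_append]
  · rw [pathL_self] at hL
    exact absurd hL.symm (by simp)

lemma gfun_base_colour (hT : T.IsTree) (b : V) (f : Equiv.Perm Ω) {a₀ : Ω} (hfix : f a₀ = a₀)
    {u : V} (h : T.Adj b u) : c b (gfun hT c b f a₀ u) = f (c b u) := by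
  have hL : pathL hT c b u = [c b u] := pathL_of_adj_base hT h
  by_cases ha : c b u = a₀
  · rw [gfun, hL, transform_cons_eq f _ ha, follow_cons, follow_nil, c_step hbij, ha, hfix]
  · rw [gfun, hL, transform_cons_ne f _ ha, List.map_nil, follow_cons, follow_nil, c_step hbij]

omit hsym hbij in
lemma gfun_base (hT : T.IsTree) (b : V) (f : Equiv.Perm Ω) (a₀ : Ω) :
    gfun hT c b f a₀ b = b := by
  rw [gfun, pathL_self, transform_nil, follow_nil]


lemma gfun_local (hT : T.IsTree) (b : V) (f : Equiv.Perm Ω) {a₀ : Ω} (hfix : f a₀ = a₀)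
    (x : V) :
    (∀ u, T.Adj x u → c (gfun hT c b f a₀ x) (gfun hT c b f a₀ u) = c x u) ∨
    (∀ u, T.Adj x u → c (gfun hT c b f a₀ x) (gfun hT c b f a₀ u) = f (c x u)) := by
  set g := gfun hT c b f a₀ with hg
  cases hLx : pathL hT c b x with
  | nil =>
    right
    have hxb : x = b := eq_base hbij hT hLx
    intro u hu
    rw [hxb] at hu ⊢
    rw [hg, gfun_base]
    exact gfun_base_colour hsym hbij hT b f hfix hu
  | cons a l =>
    by_cases ha : a = a₀
    · left
      have hgx : g x = x := gfun_fix hbij hT b f a₀ x (Or.inl (by rw [hLx, List.head?_cons, ha]))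
      intro u hu
      rcases pathL_adj hT (b := b) hu with hL | hL
      · have hgu : g u = u := gfun_fix hbij hT b f a₀ u
          (Or.inl (by rw [hL, hLx, List.cons_append, List.head?_cons, ha]))
        rw [hgx, hgu]
      · cases hLu : pathL hT c b u with
        | nil =>
          have hub : u = b := eq_base hbij hT hLu
          rw [hgx, hub, hg, gfun_base]
        | cons a' l' =>
          have ha' : a' = a₀ := by
            rw [hLx, hLu, List.cons_append] at hL
            rw [← (List.cons.injEq _ _ _ _).mp hL |>.1, ha]
          have hgu : g u = u := gfun_fix hbij hT b f a₀ u
            (Or.inl (by rw [hLu, List.head?_cons, ha']))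
          rw [hgx, hgu]
    · right
      have hgx : g x = follow T c b ((pathL hT c b x).map f) := by
        rw [hg, gfun, hLx, transform_cons_ne f _ ha, ← List.map_cons, ← hLx]
      intro u hu
      rcases pathL_adj hT (b := b) hu with hL | hL
      · -- pathL u = pathL x ++ [c x u]
        have hgu : g u = step T c (g x) (f (c x u)) := by
          rw [hg, gfun, hL, hLx, List.cons_append, transform_cons_ne f _ ha,
            show (f a :: List.map f (l ++ [c x u]) : List Ω) =
              (f a :: List.map f l) ++ [f (c x u)] by simp,
            follow_append, ← List.map_cons, ← hLx, ← hgx]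
          rfl
        rw [hgu, c_step hbij]
      · -- pathL x = pathL u ++ [c u x]
        cases hLu : pathL hT c b u with
        | nil =>
          have hub : u = b := eq_base hbij hT hLu
          rw [hub] at hu hL ⊢
          rw [pathL_self, List.nil_append] at hL
          have h9 : a :: l = [c b x] := hLx.symm.trans hL
          have hca : c b x ≠ a₀ := by
            rw [← ((List.cons.injEq _ _ _ _).mp h9).1]
            exact ha
          have hgxs : g x = step T c b (f (c b x)) := by
            rw [hg, gfun, hL, transform_cons_ne f _ hca]
            simp
          have hgb : g b = b := by rw [hg, gfun_base]
          have hadj : T.Adj b (g x) := by rw [hgxs]; exact step_adj hbij _ _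
          rw [hgb, hsym (g x) b hadj.symm, hgxs, c_step hbij, ← hsym x b hu]
        | cons a' l' =>
          have ha' : a' ≠ a₀ := by
            rw [hLx, hLu, List.cons_append] at hL
            rw [((List.cons.injEq _ _ _ _).mp hL).1] at ha
            exact ha
          have hgu : g u = follow T c b ((pathL hT c b u).map f) := by
            rw [hg, gfun, hLu, transform_cons_ne f _ ha', ← List.map_cons, ← hLu]
          have hgx' : g x = step T c (g u) (f (c u x)) := by
            rw [hg, gfun, hL, hLu, List.cons_append, transform_cons_ne f _ ha',
              show (f a' :: List.map f (l' ++ [c u x]) : List Ω) =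
                (f a' :: List.map f l') ++ [f (c u x)] by simp,
              follow_append, ← List.map_cons, ← hLu, ← hgu]
            rfl
          have hadj : T.Adj (g u) (g x) := by rw [hgx']; exact step_adj hbij _ _
          rw [← hsym (g u) (g x) hadj, hgx', c_step hbij, hsym u x hu.symm]

lemma exists_gequiv (hT : T.IsTree) (b : V) (f : Equiv.Perm Ω) {a₀ : Ω} (hfix : f a₀ = a₀) :
    ∃ g : Equiv.Perm V,
      (∀ u w : V, T.Adj u w ↔ T.Adj (g u) (g w)) ∧
      (∀ x : V, (∀ u, T.Adj x u → c (g x) (g u) = c x u) ∨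
        (∀ u, T.Adj x u → c (g x) (g u) = f (c x u))) ∧
      (∀ u : V, (pathL hT c b u).head? = some a₀ → g u = u) ∧
      g b = b ∧
      (∀ u, T.Adj b u → c b (g u) = f (c b u)) := by
  have hfix' : f⁻¹ a₀ = a₀ := by
    conv_lhs => rw [← hfix]
    simp
  refine ⟨⟨gfun hT c b f a₀, gfun hT c b f⁻¹ a₀,
    fun u => gfun_inv hsym hbij hT b f hfix u,
    fun u => by simpa using gfun_inv hsym hbij hT b f⁻¹ hfix' u⟩, ?_, ?_, ?_, ?_, ?_⟩
  · intro u w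
    simp only [Equiv.coe_fn_mk]
    constructor
    · exact fun h => gfun_adj hsym hbij hT b f a₀ h
    · intro h
      have := gfun_adj hsym hbij hT b f⁻¹ a₀ h
      rwa [gfun_inv hsym hbij hT b f hfix, gfun_inv hsym hbij hT b f hfix] at this
  · intro x
    simp only [Equiv.coe_fn_mk]
    exact gfun_local hsym hbij hT b f hfix x
  · intro u h
    simp only [Equiv.coe_fn_mk]
    exact gfun_fix hbij hT b f a₀ u (Or.inl h)
  · simp only [Equiv.coe_fn_mk]
    exact gfun_base hT b f a₀
  · intro u h
    simp only [Equiv.coe_fn_mk]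
    exact gfun_base_colour hsym hbij hT b f hfix h

end Construct


section Ascend

variable {T : SimpleGraph V} {c : V → V → Ω}
variable (hsym : ∀ u v : V, T.Adj u v → c u v = c v u)
variable (hbij : ∀ v : V, Set.BijOn (fun u => c v u) (T.neighborSet v) Set.univ)

include hbij in
lemma follow_ascend {w : ℕ → V} {m : ℕ}
    (hadj : ∀ j < m, T.Adj (w j) (w (j+1))) :
    ∀ s ≤ m, follow T c (w 0) ((List.range s).map (fun j => c (w j) (w (j+1)))) = w s := by
  intro s
  induction s with
  | zero => intro _; simp
  | succ s ih =>
    intro hs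
    rw [List.range_succ, List.map_append, follow_append, ih (by omega)]
    simp [step_eq hbij (hadj s (by omega))]

include hsym hbij in
lemma chain'_ascend {w : ℕ → V} {m : ℕ}
    (hadj : ∀ j < m, T.Adj (w j) (w (j+1)))
    (hred : ∀ j, j + 2 ≤ m → w j ≠ w (j+2)) :
    ∀ t ≤ m, ((List.range t).map (fun j => c (w j) (w (j+1)))).Chain' (· ≠ ·) := by
  intro t htm
  change List.IsChain _ _; rw [List.isChain_map]
  cases t with
  | zero => simp
  | succ s =>
    rw [List.isChain_range_succ]
    intro j hj he
    have h1 : c (w (j+1)) (w j) = c (w (j+1)) (w (j+2)) := by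
      rw [← hsym (w j) (w (j+1)) (hadj j (by omega)), he]
    exact hred j (by omega)
      (c_inj hbij (hadj j (by omega)).symm (hadj (j+1) (by omega)) h1)

include hsym hbij in
lemma pathL_ascend (hT : T.IsTree) {w : ℕ → V} {m : ℕ}
    (hadj : ∀ j < m, T.Adj (w j) (w (j+1)))
    (hred : ∀ j, j + 2 ≤ m → w j ≠ w (j+2)) :
    ∀ t ≤ m, pathL hT c (w 0) (w t) = (List.range t).map (fun j => c (w j) (w (j+1))) := by
  intro t htm
  rw [← follow_ascend hbij hadj t htm,
    pathL_follow hsym hbij hT _ (chain'_ascend hsym hbij hadj hred t htm)]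

include hbij in
lemma follow_take_mem_support :
    ∀ (l : List Ω) (x : V) (n : ℕ),
      follow T c x (l.take n) ∈ (walkOf hbij x l).support := by
  intro l
  induction l with
  | nil => intro x n; simp [walkOf]
  | cons a l ih =>
    intro x n
    cases n with
    | zero =>
      rw [List.take_zero, follow_nil]
      exact Walk.start_mem_support _
    | succ n =>
      show follow T c (step T c x a) (List.take n l) ∈
        (Walk.cons (step_adj hbij x a) (walkOf hbij (step T c x a) l)).support
      rw [Walk.support_cons]
      exact List.mem_cons_of_mem _ (ih _ n)

lemma map_eq_self_mem {α : Type*} (g : α → α) :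
    ∀ (L : List α), L.map g = L → ∀ x ∈ L, g x = x := by
  intro L
  induction L with
  | nil => simp
  | cons a L ih =>
    intro h x hx
    rw [List.map_cons] at h
    obtain ⟨h1, h2⟩ := (List.cons.injEq _ _ _ _).mp h
    rcases List.mem_cons.mp hx with rfl | hx
    · exact h1
    · exact ih h2 x hx

include hsym hbij in
lemma fix_of_fix_ends (hT : T.IsTree) {w : ℕ → V} {m : ℕ}
    (hadj : ∀ j < m, T.Adj (w j) (w (j+1)))
    (hred : ∀ j, j + 2 ≤ m → w j ≠ w (j+2))
    (g : Equiv.Perm V) (hg : ∀ u x : V, T.Adj u x ↔ T.Adj (g u) (g x))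
    (h0 : g (w 0) = w 0) (hm : g (w m) = w m) :
    ∀ t ≤ m, g (w t) = w t := by
  intro t htm
  set l : List Ω := (List.range m).map (fun j => c (w j) (w (j+1))) with hl
  have hfol : follow T c (w 0) l = w m := follow_ascend hbij hadj m le_rfl
  have hch : l.Chain' (· ≠ ·) := chain'_ascend hsym hbij hadj hred m le_rfl
  set W : T.Walk (w 0) (w m) := (walkOf hbij (w 0) l).copy rfl hfol with hW
  have hWpath : W.IsPath := by
    rw [hW, Walk.isPath_copy]
    exact walkOf_isPath hsym hbij hT.IsAcyclic l (w 0) hch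
  let φ : T →g T := ⟨⇑g, fun {a b} h => (hg a b).mp h⟩
  have hmap : ((W.map φ).copy h0 hm).IsPath := by
    rw [Walk.isPath_copy]
    exact Walk.map_isPath_of_injective (f := φ) g.injective hWpath
  have hEq : ((W.map φ).copy h0 hm) = W := by
    have := hT.IsAcyclic.path_unique ⟨(W.map φ).copy h0 hm, hmap⟩ ⟨W, hWpath⟩
    exact congrArg Subtype.val this
  have hsupp : W.support.map g = W.support := by
    have := congrArg Walk.support hEq
    rwa [Walk.support_copy, Walk.support_map] at this
  apply map_eq_self_mem g W.support hsupp
  have htake : l.take t = (List.range t).map (fun j => c (w j) (w (j+1))) := by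
    rw [hl, ← List.map_take, List.take_range, min_eq_left htm]
  have : follow T c (w 0) (l.take t) = w t := by
    rw [htake]
    exact follow_ascend hbij hadj t htm
  rw [hW, Walk.support_copy, ← this]
  exact follow_take_mem_support hbij l (w 0) t

end Ascend


lemma relindex_stabilizer {G X : Type*} [Group G] [MulAction G X] (B : Subgroup G) (x : X) :
    (B ⊓ MulAction.stabilizer G x).relIndex B = Nat.card (MulAction.orbit B x) := by
  have h1 : (B ⊓ MulAction.stabilizer G x).subgroupOf B = MulAction.stabilizer B x := by
    ext g
    rw [Subgroup.mem_subgroupOf, Subgroup.mem_inf, MulAction.mem_stabilizer_iff,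
      MulAction.mem_stabilizer_iff]
    have : (g • x : X) = (g : G) • x := rfl
    rw [this]
    simp [g.2]
  rw [Subgroup.relIndex, h1, Subgroup.index]
  exact (Nat.card_congr (MulAction.orbitEquivQuotientStabilizer B x)).symm


section Main

variable {T : SimpleGraph V} {c : V → V → Ω}

lemma key_step
    (hT : T.IsTree)
    (hsym : ∀ u v : V, T.Adj u v → c u v = c v u)
    (hbij : ∀ v : V, Set.BijOn (fun u => c v u) (T.neighborSet v) Set.univ)
    (σ : Equiv.Perm V → V → Equiv.Perm Ω)
    (hσ : ∀ g : Equiv.Perm V, (∀ u w : V, T.Adj u w ↔ T.Adj (g u) (g w)) →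
      ∀ v u : V, T.Adj v u → σ g v (c v u) = c (g v) (g u))
    (F : Subgroup (Equiv.Perm Ω)) (UF : Subgroup (Equiv.Perm V))
    (hUF : ∀ g : Equiv.Perm V, g ∈ UF ↔
      ((∀ u w : V, T.Adj u w ↔ T.Adj (g u) (g w)) ∧ ∀ v : V, σ g v ∈ F))
    (k : ℕ) (v : ℕ → V)
    (hadj : ∀ i ≤ k, T.Adj (v i) (v (i + 1)))
    (hred : ∀ i : ℕ, i + 2 ≤ k + 1 → v i ≠ v (i + 2))
    (H : ℕ → Subgroup (Equiv.Perm V))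
    (hH : ∀ (m : ℕ) (g : Equiv.Perm V), g ∈ H m ↔ g ∈ UF ∧ ∀ j ≤ m, g (v j) = v j)
    (n : ℕ) (hn : n + 1 ≤ k) :
    (H (n+2)).relIndex (H (n+1)) =
      (F ⊓ MulAction.stabilizer (Equiv.Perm Ω) (c (v (n+1)) (v (n+2)))).relIndex
        (F ⊓ MulAction.stabilizer (Equiv.Perm Ω) (c (v n) (v (n+1)))) := by
  set b := v (n+1) with hb
  set a₀ := c (v (n+1)) (v n) with ha₀
  set a₁ := c (v (n+1)) (v (n+2)) with ha₁
  have hadj01 : T.Adj (v n) (v (n+1)) := hadj n (by omega)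
  have hadj12 : T.Adj (v (n+1)) (v (n+2)) := hadj (n+1) hn
  have hc0 : c (v n) (v (n+1)) = a₀ := by rw [ha₀, hsym _ _ hadj01]
  rw [hc0]
  set F₀ := F ⊓ MulAction.stabilizer (Equiv.Perm Ω) a₀ with hF₀
  have hHsplit : H (n+2) = H (n+1) ⊓ MulAction.stabilizer (Equiv.Perm V) (v (n+2)) := by
    ext g
    rw [Subgroup.mem_inf, hH, hH, MulAction.mem_stabilizer_iff, Equiv.Perm.smul_def]
    constructor
    · rintro ⟨h1, h2⟩
      exact ⟨⟨h1, fun j hj => h2 j (by omega)⟩, h2 (n+2) le_rfl⟩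
    · rintro ⟨⟨h1, h2⟩, h3⟩
      refine ⟨h1, fun j hj => ?_⟩
      rcases Nat.lt_or_ge j (n+2) with hlt | hge
      · exact h2 j (by omega)
      · have hj2 : j = n+2 := by omega
        rw [hj2]; exact h3
  have hRHSsplit : (F ⊓ MulAction.stabilizer (Equiv.Perm Ω) a₁) ⊓ F₀ =
      F₀ ⊓ MulAction.stabilizer (Equiv.Perm Ω) a₁ := by
    ext π
    simp only [hF₀, Subgroup.mem_inf]
    tauto
  rw [hHsplit, relindex_stabilizer, ← Subgroup.inf_relIndex_right, hRHSsplit,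
    relindex_stabilizer]
  have hfwd : ∀ u ∈ MulAction.orbit (H (n+1)) (v (n+2)),
      T.Adj b u ∧ c b u ∈ MulAction.orbit F₀ a₁ := by
    rintro u hu
    obtain ⟨⟨g, hg⟩, rfl⟩ := MulAction.mem_orbit_iff.mp hu
    obtain ⟨hgUF, hgfix⟩ := (hH _ g).mp hg
    obtain ⟨hgadj, hgσ⟩ := (hUF g).mp hgUF
    have hgb : g b = b := hgfix (n+1) le_rfl
    have hsmul : ((⟨g, hg⟩ : ↥(H (n+1))) • (v (n+2)) : V) = g (v (n+2)) := rfl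
    rw [hsmul]
    constructor
    · have h := (hgadj b (v (n+2))).mp hadj12
      rwa [hgb] at h
    · have hσb := hσ g hgadj b (v (n+2)) hadj12
      rw [hgb] at hσb
      have hσ0 : σ g b a₀ = a₀ := by
        have h := hσ g hgadj b (v n) hadj01.symm
        rw [hgb, hgfix n (by omega)] at h
        exact h
      have hmem : σ g b ∈ F₀ := by
        rw [hF₀, Subgroup.mem_inf, MulAction.mem_stabilizer_iff, Equiv.Perm.smul_def]
        exact ⟨hgσ b, hσ0⟩
      rw [← hσb]
      exact MulAction.mem_orbit_iff.mpr ⟨⟨σ g b, hmem⟩, rfl⟩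
  have hsurj : ∀ y ∈ MulAction.orbit F₀ a₁,
      ∃ u ∈ MulAction.orbit (H (n+1)) (v (n+2)), c b u = y := by
    rintro y hy
    obtain ⟨p, rfl⟩ := MulAction.mem_orbit_iff.mp hy
    obtain ⟨hπF, hπ0'⟩ := Subgroup.mem_inf.mp p.2
    have hπ0 : (p : Equiv.Perm Ω) a₀ = a₀ := hπ0'
    obtain ⟨g, hgadj, hglocal, hgfixhead, hgb, hgbase⟩ :=
      exists_gequiv hsym hbij hT b (p : Equiv.Perm Ω) hπ0
    have hgUF : g ∈ UF := by
      rw [hUF]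
      refine ⟨hgadj, fun w => ?_⟩
      rcases hglocal w with hid | hπw
      · have hone : σ g w = 1 := by
          ext a
          obtain ⟨u, hunb, hcu⟩ := (hbij w).surjOn (Set.mem_univ a)
          have h1 := hσ g hgadj w u hunb
          rw [hid u hunb] at h1
          rw [← hcu]
          simpa using h1
        rw [hone]; exact one_mem F
      · have hπeq : σ g w = (p : Equiv.Perm Ω) := by
          ext a
          obtain ⟨u, hunb, hcu⟩ := (hbij w).surjOn (Set.mem_univ a)
          have h1 := hσ g hgadj w u hunb
          rw [hπw u hunb] at h1
          rw [← hcu]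
          exact h1
        rw [hπeq]; exact hπF
    have hgfix : ∀ j ≤ n+1, g (v j) = v j := by
      intro j hj
      rcases Nat.eq_or_lt_of_le hj with heq | hjlt
      · rw [heq]; exact hgb
      · have hjn : j ≤ n := by omega
        have hadj' : ∀ t, t < n+1 → T.Adj (v (n+1-t)) (v (n+1-(t+1))) := by
          intro t ht
          have e1 : n+1-t = (n-t)+1 := by omega
          have e2 : n+1-(t+1) = n-t := by omega
          rw [e1, e2]
          exact (hadj (n-t) (by omega)).symm
        have hred' : ∀ t, t+2 ≤ n+1 → v (n+1-t) ≠ v (n+1-(t+2)) := by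
          intro t ht
          have e1 : n+1-t = (n-1-t)+2 := by omega
          have e2 : n+1-(t+2) = n-1-t := by omega
          rw [e1, e2]
          exact (hred (n-1-t) (by omega)).symm
        have hL := pathL_ascend (w := fun t => v (n+1-t)) hsym hbij hT hadj' hred'
          (n+1-j) (by omega)
        simp only [Nat.sub_zero] at hL
        rw [show n+1-(n+1-j) = j by omega, ← hb] at hL
        apply hgfixhead
        rw [hL, show n+1-j = (n-j)+1 by omega, List.range_succ_eq_map, List.map_cons,
          List.head?_cons]
        rfl
    have hgH : g ∈ H (n+1) := (hH _ g).mpr ⟨hgUF, hgfix⟩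
    refine ⟨g (v (n+2)), MulAction.mem_orbit_iff.mpr ⟨⟨g, hgH⟩, rfl⟩, ?_⟩
    exact hgbase (v (n+2)) hadj12
  apply Nat.card_congr
  refine Equiv.ofBijective (fun u => ⟨c b ↑u, (hfwd ↑u u.2).2⟩) ⟨?_, ?_⟩
  · rintro ⟨u₁, h₁⟩ ⟨u₂, h₂⟩ he
    have hee : c b u₁ = c b u₂ := congrArg Subtype.val he
    exact Subtype.ext (c_inj hbij (hfwd u₁ h₁).1 (hfwd u₂ h₂).1 hee)
  · rintro ⟨y, hy⟩
    obtain ⟨u, hu, hcu⟩ := hsurj y hy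
    exact ⟨⟨u, hu⟩, Subtype.ext hcu⟩

end Main

end BMAux

open BMAux in
theorem stabilizer_index_along_path {V Ω : Type*} [Fintype Ω]
    (T : SimpleGraph V) (hT : T.IsTree) (c : V → V → Ω)
    (hsym : ∀ u v : V, T.Adj u v → c u v = c v u)
    (hbij : ∀ v : V, Set.BijOn (fun u => c v u) (T.neighborSet v) Set.univ)
    (σ : Equiv.Perm V → V → Equiv.Perm Ω)
    (hσ : ∀ g : Equiv.Perm V, (∀ u w : V, T.Adj u w ↔ T.Adj (g u) (g w)) →
      ∀ v u : V, T.Adj v u → σ g v (c v u) = c (g v) (g u))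
    (F : Subgroup (Equiv.Perm Ω))
    (UF : Subgroup (Equiv.Perm V))
    (hUF : ∀ g : Equiv.Perm V, g ∈ UF ↔
      ((∀ u w : V, T.Adj u w ↔ T.Adj (g u) (g w)) ∧ ∀ v : V, σ g v ∈ F))
    (k : ℕ) (v : ℕ → V)
    (hadj : ∀ i ≤ k, T.Adj (v i) (v (i + 1)))
    (hred : ∀ i : ℕ, i + 2 ≤ k + 1 → v i ≠ v (i + 2)) :
    ((UF ⊓ MulAction.stabilizer (Equiv.Perm V) (v k) ⊓
        MulAction.stabilizer (Equiv.Perm V) (v (k + 1))).relIndex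
      (UF ⊓ MulAction.stabilizer (Equiv.Perm V) (v 0) ⊓
        MulAction.stabilizer (Equiv.Perm V) (v 1))) =
    ∏ i ∈ Finset.range k,
      ((F ⊓ MulAction.stabilizer (Equiv.Perm Ω) (c (v (i + 1)) (v (i + 2)))).relIndex
        (F ⊓ MulAction.stabilizer (Equiv.Perm Ω) (c (v i) (v (i + 1))))) := by
  classical
  set H : ℕ → Subgroup (Equiv.Perm V) := fun m =>
    UF ⊓ ⨅ j ∈ Finset.range (m+1), MulAction.stabilizer (Equiv.Perm V) (v j) with hHdef
  have hH : ∀ (m : ℕ) (g : Equiv.Perm V), g ∈ H m ↔ g ∈ UF ∧ ∀ j ≤ m, g (v j) = v j := by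
    intro m g
    simp only [hHdef, Subgroup.mem_inf, Subgroup.mem_iInf, Finset.mem_range,
      MulAction.mem_stabilizer_iff, Equiv.Perm.smul_def]
    constructor
    · rintro ⟨h1, h2⟩; exact ⟨h1, fun j hj => h2 j (by omega)⟩
    · rintro ⟨h1, h2⟩; exact ⟨h1, fun j hj => h2 j (by omega)⟩
  have hB : UF ⊓ MulAction.stabilizer (Equiv.Perm V) (v 0) ⊓
      MulAction.stabilizer (Equiv.Perm V) (v 1) = H 1 := by
    ext g
    rw [Subgroup.mem_inf, Subgroup.mem_inf, hH, MulAction.mem_stabilizer_iff,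
      MulAction.mem_stabilizer_iff, Equiv.Perm.smul_def, Equiv.Perm.smul_def]
    constructor
    · rintro ⟨⟨h1, h2⟩, h3⟩
      refine ⟨h1, fun j hj => ?_⟩
      interval_cases j
      · exact h2
      · exact h3
    · rintro ⟨h1, h2⟩
      exact ⟨⟨h1, h2 0 (by omega)⟩, h2 1 le_rfl⟩
  have hAB : (UF ⊓ MulAction.stabilizer (Equiv.Perm V) (v k) ⊓
      MulAction.stabilizer (Equiv.Perm V) (v (k+1))) ⊓
      (UF ⊓ MulAction.stabilizer (Equiv.Perm V) (v 0) ⊓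
      MulAction.stabilizer (Equiv.Perm V) (v 1)) = H (k+1) := by
    ext g
    simp only [Subgroup.mem_inf, MulAction.mem_stabilizer_iff, Equiv.Perm.smul_def]
    rw [hH]
    constructor
    · rintro ⟨⟨⟨h1, hk1⟩, hk2⟩, ⟨⟨_, h01⟩, h11⟩⟩
      refine ⟨h1, ?_⟩
      have hgadj := ((hUF g).mp h1).1
      exact fix_of_fix_ends hsym hbij hT (w := v) (m := k+1)
        (fun j hj => hadj j (by omega)) hred g hgadj h01 hk2
    · rintro ⟨h1, h2⟩
      exact ⟨⟨⟨h1, h2 k (by omega)⟩, h2 (k+1) le_rfl⟩,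
        ⟨⟨h1, h2 0 (by omega)⟩, h2 1 (by omega)⟩⟩
  have chain : ∀ n, n ≤ k → (H (n+1)).relIndex (H 1) =
      ∏ i ∈ Finset.range n,
        ((F ⊓ MulAction.stabilizer (Equiv.Perm Ω) (c (v (i + 1)) (v (i + 2)))).relIndex
          (F ⊓ MulAction.stabilizer (Equiv.Perm Ω) (c (v i) (v (i + 1))))) := by
    intro n
    induction n with
    | zero => intro _; simp [Subgroup.relIndex_self]
    | succ n ih =>
      intro hn
      have hle1 : H (n+2) ≤ H (n+1) := by
        intro g hg
        obtain ⟨h1, h2⟩ := (hH _ g).mp hg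
        exact (hH _ g).mpr ⟨h1, fun j hj => h2 j (by omega)⟩
      have hle2 : H (n+1) ≤ H 1 := by
        intro g hg
        obtain ⟨h1, h2⟩ := (hH _ g).mp hg
        exact (hH _ g).mpr ⟨h1, fun j hj => h2 j (by omega)⟩
      rw [← Subgroup.relIndex_mul_relIndex (H (n+2)) (H (n+1)) (H 1) hle1 hle2,
        ih (by omega), Finset.prod_range_succ,
        key_step hT hsym hbij σ hσ F UF hUF k v hadj hred H hH n hn]
      exact mul_comm _ _
  rw [← Subgroup.inf_relIndex_right, hAB, hB]
  exact chain k le_rfl
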